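/- arXiv:2002.08757 — 2 statements merged into one kernel-verified Lean document; each statement's English description precedes it below -/
import Mathlib

section
/- Under the simulation framework, and assuming that b(·,n) is continuous on Θ for each n and that there exist β > 0, M > 0 and N such that sup_{θ∈Θ} ‖b(θ, n)‖_∞ ≤ M n^{−β} for all n ≥ N, one has ‖E[θ̂_n] − θ₀‖_∞ ≤ 2 M n^{−β} for all n ≥ N. -/
open MeasureTheory

/-- The first-order bias bound (proof:bias:inter:3) in the proof of Theorem 1:
if `sup_{θ∈Θ} ‖b(θ,n)‖_∞ ≤ M n^{-β}` for all `n ≥ N`, then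
`‖E[θ̂_n] − θ₀‖_∞ ≤ 2 M n^{-β}` for all `n ≥ N` (the `∞`-norm bounds are stated
coordinatewise). -/
theorem stmt_4 {p H : ℕ} (hp : 1 ≤ p) (hH : 1 ≤ H)
    {Ω : Type*} [MeasurableSpace Ω] (P : Measure Ω) [IsProbabilityMeasure P]
    (Θ : Set (EuclideanSpace ℝ (Fin p))) (hΘ : IsCompact Θ)
    (θ₀ : EuclideanSpace ℝ (Fin p)) (hθ₀ : θ₀ ∈ interior Θ)
    -- bias function `b(·, n)`, continuous on `Θ` for each `n`
    (b : ℕ → EuclideanSpace ℝ (Fin p) → EuclideanSpace ℝ (Fin p))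
    (hb_cont : ∀ n : ℕ, ContinuousOn (b n) Θ)
    -- zero-mean error of the initial estimator
    (v : ℕ → Ω → EuclideanSpace ℝ (Fin p))
    (hv_int : ∀ n, Integrable (v n) P) (hv_mean : ∀ n, ∫ ω, v n ω ∂P = 0)
    -- initial estimator `θ̃_n = θ₀ + b(θ₀, n) + v(θ₀, n)`
    (θtilde : ℕ → Ω → EuclideanSpace ℝ (Fin p))
    (hθtilde : ∀ n ω, θtilde n ω = θ₀ + b n θ₀ + v n ω)
    -- simulation errors and the OBREE `θ̂_n`, solving `θ̃_n = π*(θ̂_n, n)` a.s.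
    (vstar : ℕ → Fin H → EuclideanSpace ℝ (Fin p) → Ω → EuclideanSpace ℝ (Fin p))
    (θhat : ℕ → Ω → EuclideanSpace ℝ (Fin p))
    (hθhatΘ : ∀ n ω, θhat n ω ∈ Θ)
    (hfix : ∀ n, ∀ᵐ ω ∂P, θtilde n ω
      = θhat n ω + b n (θhat n ω) + (H : ℝ)⁻¹ • ∑ h : Fin H, vstar n h (θhat n ω) ω)
    (hθhat_int : ∀ n, Integrable (θhat n) P)
    (hbθhat_int : ∀ n, Integrable (fun ω => b n (θhat n ω)) P)
    (hvstar_int : ∀ n, ∀ h : Fin H, Integrable (fun ω => vstar n h (θhat n ω) ω) P)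
    (hvstar_mean : ∀ n, ∀ h : Fin H, ∫ ω, vstar n h (θhat n ω) ω ∂P = 0)
    -- uniform `∞`-norm bound on the bias function
    (β M : ℝ) (hβ : 0 < β) (hM : 0 < M) (N : ℕ)
    (hb_bound : ∀ n : ℕ, n ≥ N → ∀ θ ∈ Θ, ∀ i : Fin p, |b n θ i| ≤ M * (n : ℝ) ^ (-β)) :
    ∀ n : ℕ, n ≥ N → ∀ i : Fin p,
      |(∫ ω, θhat n ω ∂P) i - θ₀ i| ≤ 2 * M * (n : ℝ) ^ (-β) := by
  intro n hn i
  -- integral of LHS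
  have hLHS : ∫ ω, θtilde n ω ∂P = θ₀ + b n θ₀ := by
    have : (fun ω => θtilde n ω) = fun ω => (θ₀ + b n θ₀) + v n ω := by
      funext ω; rw [hθtilde n ω]
    rw [this, integral_add (integrable_const _) (hv_int n), integral_const,
      probReal_univ, one_smul, hv_mean n, add_zero]
  -- integral of the sum of vstar's
  have hsum_int : Integrable (fun ω => ∑ h : Fin H, vstar n h (θhat n ω) ω) P :=
    integrable_finset_sum _ fun h _ => hvstar_int n h
  have hsum0 : ∫ ω, (H : ℝ)⁻¹ • ∑ h : Fin H, vstar n h (θhat n ω) ω ∂P = 0 := by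
    rw [integral_smul, integral_finset_sum _ fun h _ => hvstar_int n h]
    simp [hvstar_mean n]
  have hF : Integrable (fun ω => θhat n ω + b n (θhat n ω)) P :=
    (hθhat_int n).add (hbθhat_int n)
  have hG : Integrable (fun ω => (H : ℝ)⁻¹ • ∑ h : Fin H, vstar n h (θhat n ω) ω) P :=
    hsum_int.smul ((H : ℝ)⁻¹)
  have hRHS : ∫ ω, θtilde n ω ∂P
      = (∫ ω, θhat n ω ∂P) + ∫ ω, b n (θhat n ω) ∂P := by
    rw [integral_congr_ae (hfix n), integral_add hF hG,
      integral_add (hθhat_int n) (hbθhat_int n), hsum0, add_zero]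
  have h := hLHS.symm.trans hRHS
  have key : (∫ ω, θhat n ω ∂P) - θ₀ = b n θ₀ - ∫ ω, b n (θhat n ω) ∂P :=
    sub_eq_sub_iff_add_eq_add.mpr (h.symm.trans (add_comm θ₀ (b n θ₀)))
  have hθ₀Θ : θ₀ ∈ Θ := interior_subset hθ₀
  -- coordinate i of key
  have keyi : (∫ ω, θhat n ω ∂P) i - θ₀ i = b n θ₀ i - (∫ ω, b n (θhat n ω) ∂P) i := by
    have := congrArg (fun x => (EuclideanSpace.proj (𝕜 := ℝ) i) x) key
    simpa using this
  -- bound on the expectation of b(θhat) coordinate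
  have hEb : |(∫ ω, b n (θhat n ω) ∂P) i| ≤ M * (n : ℝ) ^ (-β) := by
    have hcomm : (∫ ω, b n (θhat n ω) ∂P) i
        = ∫ ω, b n (θhat n ω) i ∂P := by
      have := (EuclideanSpace.proj (𝕜 := ℝ) i).integral_comp_comm (hbθhat_int n)
      simpa using this.symm
    rw [hcomm]
    have : ‖∫ ω, b n (θhat n ω) i ∂P‖ ≤ (M * (n : ℝ) ^ (-β)) * (P Set.univ).toReal :=
      norm_integral_le_of_norm_le_const <| Filter.Eventually.of_forall fun ω => by
        simpa [Real.norm_eq_abs] using hb_bound n hn _ (hθhatΘ n ω) i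
    simpa [Real.norm_eq_abs, measure_univ] using this
  have hb0 : |b n θ₀ i| ≤ M * (n : ℝ) ^ (-β) := hb_bound n hn θ₀ hθ₀Θ i
  calc |(∫ ω, θhat n ω ∂P) i - θ₀ i|
      = |b n θ₀ i - (∫ ω, b n (θhat n ω) ∂P) i| := by rw [keyi]
    _ ≤ |b n θ₀ i| + |(∫ ω, b n (θhat n ω) ∂P) i| := abs_sub _ _
    _ ≤ 2 * M * (n : ℝ) ^ (-β) := by linarith
end

section
/- Under the simulation framework with affine asymptotic bias a(θ) = Aθ + c, with b(·,n) continuous on Θ, the following identity holds for each n: (I + A) E[θ̂_n − θ₀] = −E[ b(θ̂_n, n) − b(θ₀, n) ]; in particular, if I + A is invertible, then E[θ̂_n − θ₀] = −(I + A)^{−1} E[ b(θ̂_n, n) − b(θ₀, n) ]. -/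
open MeasureTheory

/-- The key displayed identity in the proof of Corollary 1: under the simulation
framework with affine asymptotic bias `a(θ) = Aθ + c`,
`(I + A) E[θ̂ − θ₀] = −E[b(θ̂) − b(θ₀)]`; in particular, if `I + A` is invertible,
`E[θ̂ − θ₀] = −(I + A)⁻¹ E[b(θ̂) − b(θ₀)]`. -/
theorem stmt_7 {p H : ℕ} (hp : 1 ≤ p) (hH : 1 ≤ H)
    {Ω : Type*} [MeasurableSpace Ω] (P : Measure Ω) [IsProbabilityMeasure P]
    (Θ : Set (EuclideanSpace ℝ (Fin p))) (hΘ : IsCompact Θ)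
    (θ₀ : EuclideanSpace ℝ (Fin p)) (hθ₀ : θ₀ ∈ interior Θ)
    -- affine asymptotic bias `a(θ) = Aθ + c`
    (A : Matrix (Fin p) (Fin p) ℝ) (c : EuclideanSpace ℝ (Fin p))
    (a : EuclideanSpace ℝ (Fin p) → EuclideanSpace ℝ (Fin p))
    (ha : ∀ θ, a θ = Matrix.toEuclideanLin A θ + c)
    -- bias function `b(·, n)` at the fixed sample size, continuous on `Θ`
    (b : EuclideanSpace ℝ (Fin p) → EuclideanSpace ℝ (Fin p))
    (hb_cont : ContinuousOn b Θ)
    -- zero-mean error of the initial estimator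
    (v : Ω → EuclideanSpace ℝ (Fin p))
    (hv_int : Integrable v P) (hv_mean : ∫ ω, v ω ∂P = 0)
    -- initial estimator `θ̃ = θ₀ + a(θ₀) + b(θ₀) + v`
    (θtilde : Ω → EuclideanSpace ℝ (Fin p))
    (hθtilde : ∀ ω, θtilde ω = θ₀ + a θ₀ + b θ₀ + v ω)
    -- simulation errors and the OBREE `θ̂`, solving `θ̃ = π*(θ̂)` a.s., where
    -- `π*(θ) = θ + a(θ) + b(θ) + H⁻¹ Σ_h v*_h(θ)`
    (vstar : Fin H → EuclideanSpace ℝ (Fin p) → Ω → EuclideanSpace ℝ (Fin p))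
    (θhat : Ω → EuclideanSpace ℝ (Fin p))
    (hθhatΘ : ∀ ω, θhat ω ∈ Θ)
    (hfix : ∀ᵐ ω ∂P, θtilde ω
      = θhat ω + a (θhat ω) + b (θhat ω) + (H : ℝ)⁻¹ • ∑ h : Fin H, vstar h (θhat ω) ω)
    (hθhat_int : Integrable θhat P)
    (hbθhat_int : Integrable (fun ω => b (θhat ω)) P)
    (hvstar_int : ∀ h : Fin H, Integrable (fun ω => vstar h (θhat ω) ω) P)
    (hvstar_mean : ∀ h : Fin H, ∫ ω, vstar h (θhat ω) ω ∂P = 0) :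
    Matrix.toEuclideanLin (1 + A) (∫ ω, (θhat ω - θ₀) ∂P)
        = - ∫ ω, (b (θhat ω) - b θ₀) ∂P ∧
      (IsUnit (1 + A) → ∫ ω, (θhat ω - θ₀) ∂P
        = - Matrix.toEuclideanLin (1 + A)⁻¹ (∫ ω, (b (θhat ω) - b θ₀) ∂P)) := by
  
  classical
  let T : EuclideanSpace ℝ (Fin p) →L[ℝ] EuclideanSpace ℝ (Fin p) :=
    LinearMap.toContinuousLinearMap (Matrix.toEuclideanLin A)
  have hT : ∀ x, T x = Matrix.toEuclideanLin A x := fun x => rfl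
  -- pointwise a.e. identity
  have key : ∀ᵐ ω ∂P,
      (θhat ω - θ₀) + T (θhat ω - θ₀) + (b (θhat ω) - b θ₀)
        = v ω - (H : ℝ)⁻¹ • ∑ h : Fin H, vstar h (θhat ω) ω := by
    filter_upwards [hfix] with ω hω
    rw [hθtilde ω, ha θ₀, ha (θhat ω)] at hω
    have hTsub : T (θhat ω - θ₀) = Matrix.toEuclideanLin A (θhat ω) - Matrix.toEuclideanLin A θ₀ := by
      rw [hT, map_sub]
    set S := (H : ℝ)⁻¹ • ∑ h : Fin H, vstar h (θhat ω) ω with hS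
    have hx : (θhat ω - θ₀) + (Matrix.toEuclideanLin A (θhat ω) - Matrix.toEuclideanLin A θ₀)
          + (b (θhat ω) - b θ₀) - (v ω - S)
        = (θhat ω + (Matrix.toEuclideanLin A (θhat ω) + c) + b (θhat ω) + S)
          - (θ₀ + (Matrix.toEuclideanLin A θ₀ + c) + b θ₀ + v ω) := by abel
    rw [← sub_eq_zero, hTsub, hx, ← hω, sub_self]
  -- integrability pieces
  have hint1 : Integrable (fun ω => θhat ω - θ₀) P := hθhat_int.sub (integrable_const θ₀)
  have hint2 : Integrable (fun ω => T (θhat ω - θ₀)) P := T.integrable_comp hint1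
  have hint3 : Integrable (fun ω => b (θhat ω) - b θ₀) P := hbθhat_int.sub (integrable_const (b θ₀))
  have hintS : Integrable (fun ω => (H : ℝ)⁻¹ • ∑ h : Fin H, vstar h (θhat ω) ω) P := by
    refine Integrable.smul (f := fun ω => ∑ h : Fin H, vstar h (θhat ω) ω) (H : ℝ)⁻¹ ?_
    exact integrable_finset_sum _ (fun h _ => hvstar_int h)
  -- integrate
  have hInt : ∫ ω, ((θhat ω - θ₀) + T (θhat ω - θ₀) + (b (θhat ω) - b θ₀)) ∂P
      = ∫ ω, (v ω - (H : ℝ)⁻¹ • ∑ h : Fin H, vstar h (θhat ω) ω) ∂P :=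
    integral_congr_ae key
  have hint12 : Integrable (fun ω => (θhat ω - θ₀) + T (θhat ω - θ₀)) P := hint1.add hint2
  rw [integral_add hint12 hint3] at hInt
  rw [integral_add hint1 hint2, integral_sub hv_int hintS, hv_mean,
      T.integral_comp_comm hint1] at hInt
  have hRHS : (0 : EuclideanSpace ℝ (Fin p)) - ∫ ω, (H : ℝ)⁻¹ • ∑ h : Fin H, vstar h (θhat ω) ω ∂P = 0 := by
    rw [integral_smul, integral_finset_sum _ (fun h _ => hvstar_int h)]
    simp [hvstar_mean]
  rw [hRHS] at hInt
  have hone : ∀ x : EuclideanSpace ℝ (Fin p), Matrix.toEuclideanLin (1 : Matrix (Fin p) (Fin p) ℝ) x = x := by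
    intro x
    ext i
    simp [Matrix.toEuclideanLin_apply, Matrix.one_mulVec]
  have hmul2 : ∀ (M N : Matrix (Fin p) (Fin p) ℝ) (x : EuclideanSpace ℝ (Fin p)),
      Matrix.toEuclideanLin (M * N) x = Matrix.toEuclideanLin M (Matrix.toEuclideanLin N x) := by
    intro M N x
    ext i
    simp [Matrix.toEuclideanLin_apply, Matrix.mulVec_mulVec]
  set I1 := ∫ ω, (θhat ω - θ₀) ∂P with hI1
  set I2 := ∫ ω, (b (θhat ω) - b θ₀) ∂P with hI2
  have main : Matrix.toEuclideanLin (1 + A) I1 = -I2 := by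
    have h1A : Matrix.toEuclideanLin (1 + A) I1 = I1 + Matrix.toEuclideanLin A I1 := by
      rw [map_add, LinearMap.add_apply, hone]
    rw [h1A, ← hT I1]
    exact eq_neg_of_add_eq_zero_left hInt
  refine ⟨main, fun hU => ?_⟩
  have hmul := hmul2 (1 + A)⁻¹ (1 + A) I1
  rw [Matrix.nonsing_inv_mul _ ((Matrix.isUnit_iff_isUnit_det _).mp hU), main, hone] at hmul
  rw [hmul, map_neg]
end
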